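/- arXiv:2604.15576 — 5 statements merged into one kernel-verified Lean document; each statement's English description precedes it below -/
import Mathlib

section
/- Let ν_1, …, ν_N be probability measures on ℝⁿ with finite second moments, α_1, …, α_N ≥ 0 with Σ_i α_i = 1, ρ = Σ_i α_i ν_i, with component means μ_i = ∫ x dν_i(x). Assume each ν_i has a density p_i with respect to Lebesgue measure, and let f_ML(x) = Σ_i (α_i p_i(x)/p(x)) ℓ_{μ_i} f(x) where p(x) = Σ_i α_i p_i(x) > 0. If f : ℝⁿ → ℝᵐ is differentiable with uniformly quadratically bounded linearization error with constant C ≥ 0, then ∫ ‖f(x) − f_ML(x)‖ dρ(x) ≤ C · Σ_i α_i ∫ ‖x − μ_i‖² dν_i(x). -/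
open MeasureTheory

/-- Multiple-linearization expected error bound: for a Gaussian-mixture-type measure
`ρ = Σ_i α_i ν_i` with component means `μ_i` and component densities `p_i`, and a
differentiable `f` with uniformly quadratically bounded linearization error with
constant `C ≥ 0`, the multiple-linearization approximation
`f_ML(x) = Σ_i (α_i p_i(x)/p(x)) ℓ_{μ_i} f(x)` satisfies
`∫ ‖f − f_ML‖ dρ ≤ C · Σ_i α_i ∫ ‖x − μ_i‖² dν_i`. -/
theorem multiple_linearization_error_bound {n m N : ℕ}
    (ν : Fin N → Measure (EuclideanSpace ℝ (Fin n)))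
    (hprob : ∀ i, IsProbabilityMeasure (ν i))
    (α : Fin N → ℝ) (hα : ∀ i, 0 ≤ α i) (hαsum : ∑ i, α i = 1)
    (p : Fin N → EuclideanSpace ℝ (Fin n) → ℝ)
    (hp_meas : ∀ i, Measurable (p i)) (hp_nonneg : ∀ i x, 0 ≤ p i x)
    (hdens : ∀ i, ν i = volume.withDensity (fun x => ENNReal.ofReal (p i x)))
    (μ : Fin N → EuclideanSpace ℝ (Fin n))
    (hμ : ∀ i, μ i = ∫ x, x ∂(ν i))
    (hmom1 : ∀ i, Integrable (fun x => x) (ν i))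
    (hmom2 : ∀ i, Integrable (fun x => ‖x‖ ^ 2) (ν i))
    (f : EuclideanSpace ℝ (Fin n) → EuclideanSpace ℝ (Fin m))
    (hf : Differentiable ℝ f) (C : ℝ) (hC : 0 ≤ C)
    (hquad : ∀ x₀ x, ‖f x - (f x₀ + fderiv ℝ f x₀ (x - x₀))‖ ≤ C * ‖x - x₀‖ ^ 2)
    (fML : EuclideanSpace ℝ (Fin n) → EuclideanSpace ℝ (Fin m))
    (hfML : ∀ x, fML x =
      if 0 < ∑ i, α i * p i x then
        ∑ i, ((α i * p i x) / (∑ j, α j * p j x)) •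
          (f (μ i) + fderiv ℝ f (μ i) (x - μ i))
      else 0) :
    ∫ x, ‖f x - fML x‖ ∂(∑ i, ENNReal.ofReal (α i) • ν i)
      ≤ C * ∑ i, α i * ∫ x, ‖x - μ i‖ ^ 2 ∂(ν i) := by
  set ρ : Measure (EuclideanSpace ℝ (Fin n)) := ∑ i, ENNReal.ofReal (α i) • ν i with hρ
  have hfcont : Continuous f := hf.continuous
  -- measurability of fML
  have hfML_meas : Measurable fML := by
    have : fML = fun x => if 0 < ∑ i, α i * p i x then
        ∑ i, ((α i * p i x) / (∑ j, α j * p j x)) •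
          (f (μ i) + fderiv ℝ f (μ i) (x - μ i))
      else 0 := funext hfML
    rw [this]
    apply Measurable.ite
    · exact measurableSet_lt measurable_const
        (Finset.measurable_sum _ fun i _ => (hp_meas i).const_mul _)
    · apply Finset.measurable_sum
      intro i _
      apply Measurable.smul (f := fun a => α i * p i a / ∑ j, α j * p j a)
        (g := fun a => f (μ i) + fderiv ℝ f (μ i) (a - μ i))
      · exact ((hp_meas i).const_mul _).div
          (Finset.measurable_sum _ fun j _ => (hp_meas j).const_mul _)
      · exact (continuous_const.add ((fderiv ℝ f (μ i)).continuous.comp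
          (continuous_id.sub continuous_const))).measurable
    · exact measurable_const
  have hg_meas : Measurable fun x => ENNReal.ofReal ‖f x - fML x‖ :=
    ((hfcont.measurable.sub hfML_meas).norm).ennreal_ofReal
  -- pointwise key inequality
  have key : ∀ x, ‖f x - fML x‖ * (∑ i, α i * p i x)
      ≤ C * ∑ i, α i * p i x * ‖x - μ i‖ ^ 2 := by
    intro x
    by_cases hpx : 0 < ∑ i, α i * p i x
    · set s := ∑ i, α i * p i x with hs
      have hsne : s ≠ 0 := ne_of_gt hpx
      have hwsum : ∑ i, α i * p i x / s = 1 := by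
        rw [← Finset.sum_div, ← hs, div_self hsne]
      have hrw : f x - fML x = ∑ i, (α i * p i x / s) •
          (f x - (f (μ i) + fderiv ℝ f (μ i) (x - μ i))) := by
        rw [hfML x, if_pos hpx]
        simp only [smul_sub, Finset.sum_sub_distrib, ← Finset.sum_smul, hwsum, one_smul]
        rfl
      calc ‖f x - fML x‖ * s
          ≤ (∑ i, (α i * p i x / s) * (C * ‖x - μ i‖ ^ 2)) * s := by
            apply mul_le_mul_of_nonneg_right _ hpx.le
            rw [hrw]
            refine (norm_sum_le _ _).trans (Finset.sum_le_sum fun i _ => ?_)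
            rw [norm_smul, Real.norm_eq_abs,
              abs_of_nonneg (div_nonneg (mul_nonneg (hα i) (hp_nonneg i x)) hpx.le)]
            exact mul_le_mul_of_nonneg_left (hquad (μ i) x)
              (div_nonneg (mul_nonneg (hα i) (hp_nonneg i x)) hpx.le)
        _ = C * ∑ i, α i * p i x * ‖x - μ i‖ ^ 2 := by
            rw [Finset.sum_mul, Finset.mul_sum]
            refine Finset.sum_congr rfl fun i _ => ?_
            field_simp
    · have hz : ∀ i ∈ Finset.univ, α i * p i x = 0 := by
        have hle : (∑ i, α i * p i x) ≤ 0 := le_of_not_gt hpx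
        intro i _
        have h0 : (∑ i, α i * p i x) = 0 :=
          le_antisymm hle (Finset.sum_nonneg fun j _ => mul_nonneg (hα j) (hp_nonneg j x))
        exact (Finset.sum_eq_zero_iff_of_nonneg
          (fun j _ => mul_nonneg (hα j) (hp_nonneg j x))).mp h0 i (Finset.mem_univ i)
      have h0 : (∑ i, α i * p i x) = 0 := Finset.sum_eq_zero hz
      rw [h0, mul_zero]
      have : (∑ i, α i * p i x * ‖x - μ i‖ ^ 2) = 0 :=
        Finset.sum_eq_zero fun i hi => by rw [hz i hi, zero_mul]
      rw [this, mul_zero]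
  -- integrability of ‖x - μ i‖²
  have hint : ∀ i, Integrable (fun x : EuclideanSpace ℝ (Fin n) => ‖x - μ i‖ ^ 2) (ν i) := by
    intro i
    have hb : Integrable (fun x : EuclideanSpace ℝ (Fin n) => ‖x‖ ^ 2 + 2 * ‖μ i‖ * ‖x‖ + ‖μ i‖ ^ 2) (ν i) :=
      ((hmom2 i).add (((hmom1 i).norm).const_mul _)).add (integrable_const _)
    refine hb.mono' ((continuous_id.sub continuous_const).norm.pow 2).aestronglyMeasurable
      (Filter.Eventually.of_forall fun x => ?_)
    have h1 : ‖x - μ i‖ ≤ ‖x‖ + ‖μ i‖ := norm_sub_le x (μ i)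
    have h2 : (0:ℝ) ≤ ‖x - μ i‖ := norm_nonneg _
    rw [Real.norm_eq_abs, abs_of_nonneg (pow_nonneg h2 2)]
    nlinarith [norm_nonneg x, norm_nonneg (μ i)]
  have hInn : ∀ i, 0 ≤ ∫ x, ‖x - μ i‖ ^ 2 ∂(ν i) :=
    fun i => integral_nonneg fun x => sq_nonneg _
  have hI : ∀ i, ∫⁻ x, ENNReal.ofReal (‖x - μ i‖ ^ 2) ∂(ν i)
      = ENNReal.ofReal (∫ x, ‖x - μ i‖ ^ 2 ∂(ν i)) := fun i =>
    (ofReal_integral_eq_lintegral_ofReal (hint i)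
      (Filter.Eventually.of_forall fun x => sq_nonneg _)).symm
  -- express LHS via lintegral
  rw [integral_eq_lintegral_of_nonneg_ae (f := fun x => ‖f x - fML x‖) (Filter.Eventually.of_forall fun x => norm_nonneg _)
    ((hfcont.measurable.sub hfML_meas).norm).aestronglyMeasurable]
  apply ENNReal.toReal_le_of_le_ofReal
    (mul_nonneg hC (Finset.sum_nonneg fun i _ => mul_nonneg (hα i) (hInn i)))
  -- compute the lintegral
  have hq2 : ∀ i, Measurable fun x : EuclideanSpace ℝ (Fin n) =>
      ENNReal.ofReal (‖x - μ i‖ ^ 2) := fun i =>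
    (((measurable_id.sub measurable_const).norm).pow_const 2).ennreal_ofReal
  have hq_meas : ∀ i, Measurable fun x : EuclideanSpace ℝ (Fin n) =>
      ENNReal.ofReal (α i) * (ENNReal.ofReal (p i x) * ENNReal.ofReal ‖f x - fML x‖) :=
    fun i => (measurable_const.mul (((hp_meas i).ennreal_ofReal).mul hg_meas))
  calc ∫⁻ x, ENNReal.ofReal ‖f x - fML x‖ ∂ρ
      = ∑ i, ENNReal.ofReal (α i) * ∫⁻ x, ENNReal.ofReal ‖f x - fML x‖ ∂(ν i) := by
        rw [hρ, lintegral_finset_sum_measure]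
        exact Finset.sum_congr rfl fun i _ => lintegral_smul_measure _ _
    _ = ∑ i, ∫⁻ x, ENNReal.ofReal (α i) *
          (ENNReal.ofReal (p i x) * ENNReal.ofReal ‖f x - fML x‖) ∂(volume) := by
        refine Finset.sum_congr rfl fun i _ => ?_
        rw [hdens i, lintegral_withDensity_eq_lintegral_mul volume
          ((hp_meas i).ennreal_ofReal) hg_meas, lintegral_const_mul _
          (f := fun x => ENNReal.ofReal (p i x) * ENNReal.ofReal ‖f x - fML x‖)
          (((hp_meas i).ennreal_ofReal).mul hg_meas)]
        rfl
    _ = ∫⁻ x, ∑ i, ENNReal.ofReal (α i) *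
          (ENNReal.ofReal (p i x) * ENNReal.ofReal ‖f x - fML x‖) ∂(volume) := by
        rw [lintegral_finset_sum _ fun i _ => hq_meas i]
    _ ≤ ∫⁻ x, ENNReal.ofReal (C * ∑ i, α i * p i x * ‖x - μ i‖ ^ 2) ∂(volume) := by
        apply lintegral_mono
        intro x
        dsimp only
        have heq : ∑ i, ENNReal.ofReal (α i) *
            (ENNReal.ofReal (p i x) * ENNReal.ofReal ‖f x - fML x‖)
            = ENNReal.ofReal (‖f x - fML x‖ * ∑ i, α i * p i x) := by
          rw [ENNReal.ofReal_mul (norm_nonneg _), ENNReal.ofReal_sum_of_nonneg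
            (fun i _ => mul_nonneg (hα i) (hp_nonneg i x)), Finset.mul_sum]
          refine Finset.sum_congr rfl fun i _ => ?_
          rw [ENNReal.ofReal_mul (hα i), mul_comm (ENNReal.ofReal ‖f x - fML x‖)]
          ring
        rw [heq]
        exact ENNReal.ofReal_le_ofReal (key x)
    _ = ∑ i, ENNReal.ofReal (C * α i) * ∫⁻ x, ENNReal.ofReal (‖x - μ i‖ ^ 2) ∂(ν i) := by
        have hpt : ∀ x : EuclideanSpace ℝ (Fin n), ENNReal.ofReal (C * ∑ i, α i * p i x * ‖x - μ i‖ ^ 2)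
            = ∑ i, ENNReal.ofReal (C * α i) *
              (ENNReal.ofReal (p i x) * ENNReal.ofReal (‖x - μ i‖ ^ 2)) := by
          intro x
          rw [Finset.mul_sum, ENNReal.ofReal_sum_of_nonneg (fun i _ =>
            mul_nonneg hC (mul_nonneg (mul_nonneg (hα i) (hp_nonneg i x)) (sq_nonneg _)))]
          refine Finset.sum_congr rfl fun i _ => ?_
          rw [show C * (α i * p i x * ‖x - μ i‖ ^ 2)
              = (C * α i) * (p i x * ‖x - μ i‖ ^ 2) by ring,
            ENNReal.ofReal_mul (mul_nonneg hC (hα i)),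
            ENNReal.ofReal_mul (hp_nonneg i x)]
        simp_rw [hpt]
        rw [lintegral_finset_sum _ (f := fun i x => ENNReal.ofReal (C * α i) *
              (ENNReal.ofReal (p i x) * ENNReal.ofReal (‖x - μ i‖ ^ 2)))
          fun i _ => measurable_const.mul
          (((hp_meas i).ennreal_ofReal).mul
            (hq2 i))]
        refine Finset.sum_congr rfl fun i _ => ?_
        rw [lintegral_const_mul _
          (f := fun x => ENNReal.ofReal (p i x) * ENNReal.ofReal (‖x - μ i‖ ^ 2))
          (((hp_meas i).ennreal_ofReal).mul
          (hq2 i)),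
          hdens i, lintegral_withDensity_eq_lintegral_mul volume
          ((hp_meas i).ennreal_ofReal)
          (hq2 i)]
        rfl
    _ = ENNReal.ofReal (C * ∑ i, α i * ∫ x, ‖x - μ i‖ ^ 2 ∂(ν i)) := by
        rw [Finset.mul_sum, ENNReal.ofReal_sum_of_nonneg
          (fun i _ => mul_nonneg hC (mul_nonneg (hα i) (hInn i)))]
        refine Finset.sum_congr rfl fun i _ => ?_
        rw [hI i, ← ENNReal.ofReal_mul (mul_nonneg hC (hα i)), ← mul_assoc]
end

section
/- (Theorem 1 of the paper.) Let ν_1, …, ν_N be probability measures on ℝⁿ with finite second moments, α_1, …, α_N ≥ 0 with Σ_i α_i = 1, ρ = Σ_i α_i ν_i, component means μ_i = ∫ x dν_i(x), mixture mean μ = Σ_i α_i μ_i, and assume each ν_i has a density p_i with respect to Lebesgue measure. If f : ℝⁿ → ℝᵐ is differentiable with uniformly quadratically bounded linearization error with constant C ≥ 0, then the multiple-linearization error obeys the single-linearization upper bound: ∫ ‖f(x) − f_ML(x)‖ dρ(x) ≤ C · Σ_i α_i ∫ ‖x − μ_i‖² dν_i(x) ≤ C · ∫ ‖x − μ‖²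 dρ(x), where the right-hand side is the upper bound ε_SL on ∫ ‖f − ℓ_μ f‖ dρ. -/
open MeasureTheory
open scoped RealInnerProductSpace ENNReal

open scoped RealInnerProductSpace

lemma integrable_sq_norm_sub {n : ℕ} (ν : Measure (EuclideanSpace ℝ (Fin n)))
    [IsProbabilityMeasure ν] (h2 : Integrable (fun x => ‖x‖ ^ 2) ν)
    (c : EuclideanSpace ℝ (Fin n)) : Integrable (fun x => ‖x - c‖ ^ 2) ν := by
  refine Integrable.mono ((h2.const_mul 2).add (integrable_const (2 * ‖c‖ ^ 2)))
    ((continuous_id.sub continuous_const).norm.pow 2).aestronglyMeasurable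
    (Filter.Eventually.of_forall fun x => ?_)
  have h1 : ‖x - c‖ ≤ ‖x‖ + ‖c‖ := norm_sub_le _ _
  have h0 : (0:ℝ) ≤ ‖x - c‖ := norm_nonneg _
  have : ‖x - c‖ ^ 2 ≤ 2 * ‖x‖ ^ 2 + 2 * ‖c‖ ^ 2 := by nlinarith [norm_nonneg x, norm_nonneg c, sq_nonneg (‖x‖ - ‖c‖), mul_self_le_mul_self h0 h1]
  have h2' : (0:ℝ) ≤ 2 * ‖x‖ ^ 2 + 2 * ‖c‖ ^ 2 := by positivity
  simpa [abs_of_nonneg (sq_nonneg ‖x - c‖), abs_of_nonneg h2'] using this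

lemma var_bias {n : ℕ} (ν : Measure (EuclideanSpace ℝ (Fin n)))
    [IsProbabilityMeasure ν] (h1 : Integrable (fun x => x) ν)
    (h2 : Integrable (fun x => ‖x‖ ^ 2) ν) (c : EuclideanSpace ℝ (Fin n)) :
    ∫ x, ‖x - c‖ ^ 2 ∂ν
      = (∫ x, ‖x - (∫ y, y ∂ν)‖ ^ 2 ∂ν) + ‖(∫ y, y ∂ν) - c‖ ^ 2 := by
  set μ : EuclideanSpace ℝ (Fin n) := ∫ y, y ∂ν with hm
  have hg : Integrable (fun x => x - μ) ν := h1.sub (integrable_const μ)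
  have hint : Integrable (fun x => ⟪μ - c, x - μ⟫) ν := hg.const_inner _
  have key : ∀ x : EuclideanSpace ℝ (Fin n),
      ‖x - c‖ ^ 2 = ‖x - μ‖ ^ 2 + (2 * ⟪μ - c, x - μ⟫ + ‖μ - c‖ ^ 2) := by
    intro x
    have : x - c = (x - μ) + (μ - c) := by abel
    rw [this, norm_add_sq_real]
    rw [real_inner_comm]
    ring
  calc ∫ x, ‖x - c‖ ^ 2 ∂ν
      = ∫ x, (‖x - μ‖ ^ 2 + (2 * ⟪μ - c, x - μ⟫ + ‖μ - c‖ ^ 2)) ∂ν := by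
        exact integral_congr_ae (Filter.Eventually.of_forall key)
    _ = (∫ x, ‖x - μ‖ ^ 2 ∂ν) + ∫ x, (2 * ⟪μ - c, x - μ⟫ + ‖μ - c‖ ^ 2) ∂ν := by
        exact integral_add (integrable_sq_norm_sub ν h2 μ)
          ((hint.const_mul 2).add (integrable_const _))
    _ = (∫ x, ‖x - μ‖ ^ 2 ∂ν) + ‖μ - c‖ ^ 2 := by
        congr 1
        rw [integral_add (hint.const_mul 2) (integrable_const _), integral_const,
          probReal_univ, one_smul, integral_const_mul,
          integral_inner hg]
        have : (∫ x, (x - μ) ∂ν) = 0 := by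
          rw [integral_sub h1 (integrable_const μ), integral_const, probReal_univ,
            one_smul, ← hm, sub_self]
        rw [this, inner_zero_right]
        ring

/-- Theorem 1 of the paper: for a mixture `ρ = Σ_i α_i ν_i` with component means `μ_i`,
mixture mean `μ = Σ_i α_i μ_i`, and a differentiable `f` with uniformly quadratically
bounded linearization error with constant `C ≥ 0`, the multiple-linearization error
obeys `∫ ‖f − f_ML‖ dρ ≤ C Σ_i α_i ∫ ‖x − μ_i‖² dν_i =: ε_ML`, and
`ε_ML ≤ C ∫ ‖x − μ‖² dρ =: ε_SL`, the single-linearization upper bound. -/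
theorem multiple_linearization_bound_le_single_linearization_bound {n m N : ℕ}
    (ν : Fin N → Measure (EuclideanSpace ℝ (Fin n)))
    (hprob : ∀ i, IsProbabilityMeasure (ν i))
    (α : Fin N → ℝ) (hα : ∀ i, 0 ≤ α i) (hαsum : ∑ i, α i = 1)
    (p : Fin N → EuclideanSpace ℝ (Fin n) → ℝ)
    (hp_meas : ∀ i, Measurable (p i)) (hp_nonneg : ∀ i x, 0 ≤ p i x)
    (hdens : ∀ i, ν i = volume.withDensity (fun x => ENNReal.ofReal (p i x)))
    (μ : Fin N → EuclideanSpace ℝ (Fin n))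
    (hμ : ∀ i, μ i = ∫ x, x ∂(ν i))
    (μbar : EuclideanSpace ℝ (Fin n)) (hμbar : μbar = ∑ i, α i • μ i)
    (hmom1 : ∀ i, Integrable (fun x => x) (ν i))
    (hmom2 : ∀ i, Integrable (fun x => ‖x‖ ^ 2) (ν i))
    (f : EuclideanSpace ℝ (Fin n) → EuclideanSpace ℝ (Fin m))
    (hf : Differentiable ℝ f) (C : ℝ) (hC : 0 ≤ C)
    (hquad : ∀ x₀ x, ‖f x - (f x₀ + fderiv ℝ f x₀ (x - x₀))‖ ≤ C * ‖x - x₀‖ ^ 2)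
    (fML : EuclideanSpace ℝ (Fin n) → EuclideanSpace ℝ (Fin m))
    (hfML : ∀ x, fML x =
      if 0 < ∑ i, α i * p i x then
        ∑ i, ((α i * p i x) / (∑ j, α j * p j x)) •
          (f (μ i) + fderiv ℝ f (μ i) (x - μ i))
      else 0) :
    ∫ x, ‖f x - fML x‖ ∂(∑ i, ENNReal.ofReal (α i) • ν i)
        ≤ C * ∑ i, α i * ∫ x, ‖x - μ i‖ ^ 2 ∂(ν i)
    ∧ C * ∑ i, α i * ∫ x, ‖x - μ i‖ ^ 2 ∂(ν i)
        ≤ C * ∫ x, ‖x - μbar‖ ^ 2 ∂(∑ i, ENNReal.ofReal (α i) • ν i) := by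
  have := hprob
  have hsqint : ∀ i (c : EuclideanSpace ℝ (Fin n)), Integrable (fun x => ‖x - c‖ ^ 2) (ν i) :=
    fun i c => integrable_sq_norm_sub (ν i) (hmom2 i) c
  constructor
  · set P : EuclideanSpace ℝ (Fin n) → ℝ := fun x => ∑ i, α i * p i x with hP
    have hPmeas : Measurable P := Finset.measurable_sum _ fun i _ => (hp_meas i).const_mul _
    have hPnn : ∀ x, 0 ≤ P x := fun x =>
      Finset.sum_nonneg fun i _ => mul_nonneg (hα i) (hp_nonneg i x)
    have hfmeas : Measurable f := hf.continuous.measurable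
    have hMLmeas : Measurable fML := by
      have : fML = fun x =>
          if 0 < P x then
            ∑ i, ((α i * p i x) / P x) •
              (f (μ i) + fderiv ℝ f (μ i) (x - μ i))
          else 0 := funext hfML
      rw [this]
      refine Measurable.ite (measurableSet_lt measurable_const hPmeas) ?_ measurable_const
      refine Finset.measurable_sum _ fun i _ => Measurable.smul
        (f := fun x => α i * p i x / P x) (g := fun x => f (μ i) + fderiv ℝ f (μ i) (x - μ i)) ?_ ?_
      · exact ((hp_meas i).const_mul _).div hPmeas
      · exact (continuous_const.add ((fderiv ℝ f (μ i)).continuous.comp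
          (continuous_id.sub continuous_const))).measurable
    have hgmeas : Measurable fun x => ‖f x - fML x‖ := (hfmeas.sub hMLmeas).norm
    -- pointwise inequality
    have hpt : ∀ x, ‖f x - fML x‖ * P x ≤ C * ∑ i, α i * p i x * ‖x - μ i‖ ^ 2 := by
      intro x
      by_cases hx : 0 < P x
      · set L : Fin N → EuclideanSpace ℝ (Fin m) :=
          fun i => f (μ i) + fderiv ℝ f (μ i) (x - μ i) with hL
        set w : Fin N → ℝ := fun i => (α i * p i x) / P x with hw
        have hwnn : ∀ i, 0 ≤ w i := fun i =>
          div_nonneg (mul_nonneg (hα i) (hp_nonneg i x)) hx.le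
        have hwsum : ∑ i, w i = 1 := by
          rw [hw]; rw [← Finset.sum_div]; exact div_self hx.ne'
        have hML : fML x = ∑ i, w i • L i := by rw [hfML x, if_pos hx]
        have hdiff : f x - fML x = ∑ i, w i • (f x - L i) := by
          rw [hML]
          calc f x - ∑ i, w i • L i = (∑ i, w i) • f x - ∑ i, w i • L i := by
                rw [hwsum, one_smul]
            _ = ∑ i, (w i • f x - w i • L i) := by
                rw [Finset.sum_sub_distrib, Finset.sum_smul]
            _ = ∑ i, w i • (f x - L i) := by simp [smul_sub]
        have hnorm : ‖f x - fML x‖ ≤ ∑ i, w i * (C * ‖x - μ i‖ ^ 2) := by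
          rw [hdiff]
          refine le_trans (norm_sum_le _ _) (Finset.sum_le_sum fun i _ => ?_)
          rw [norm_smul, Real.norm_eq_abs, abs_of_nonneg (hwnn i)]
          exact mul_le_mul_of_nonneg_left (hquad (μ i) x) (hwnn i)
        calc ‖f x - fML x‖ * P x ≤ (∑ i, w i * (C * ‖x - μ i‖ ^ 2)) * P x :=
              mul_le_mul_of_nonneg_right hnorm hx.le
          _ = ∑ i, (w i * P x) * (C * ‖x - μ i‖ ^ 2) := by
              rw [Finset.sum_mul]; exact Finset.sum_congr rfl fun i _ => by ring
          _ = C * ∑ i, α i * p i x * ‖x - μ i‖ ^ 2 := by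
              rw [Finset.mul_sum]
              refine Finset.sum_congr rfl fun i _ => ?_
              rw [hw, div_mul_cancel₀ _ hx.ne']
              ring
      · have hP0 : P x = 0 := le_antisymm (not_lt.1 hx) (hPnn x)
        rw [hP0, mul_zero]
        exact mul_nonneg hC (Finset.sum_nonneg fun i _ =>
          mul_nonneg (mul_nonneg (hα i) (hp_nonneg i x)) (sq_nonneg _))
    -- reduce to lintegrals
    have hB0 : 0 ≤ C * ∑ i, α i * ∫ x, ‖x - μ i‖ ^ 2 ∂(ν i) :=
      mul_nonneg hC (Finset.sum_nonneg fun i _ => mul_nonneg (hα i)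
        (integral_nonneg fun x => sq_nonneg _))
    rw [integral_eq_lintegral_of_nonneg_ae (Filter.Eventually.of_forall fun x => norm_nonneg _)
      hgmeas.aestronglyMeasurable]
    refine ENNReal.toReal_le_of_le_ofReal hB0 ?_
    have hgE : Measurable fun x => ENNReal.ofReal ‖f x - fML x‖ := hgmeas.ennreal_ofReal
    calc ∫⁻ x, ENNReal.ofReal ‖f x - fML x‖ ∂(∑ i, ENNReal.ofReal (α i) • ν i)
        = ∑ i, ENNReal.ofReal (α i) *
            ∫⁻ x, ENNReal.ofReal (p i x) * ENNReal.ofReal ‖f x - fML x‖ ∂volume := by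
          rw [lintegral_finset_sum_measure]
          refine Finset.sum_congr rfl fun i _ => ?_
          rw [lintegral_smul_measure, hdens i,
            lintegral_withDensity_eq_lintegral_mul volume (hp_meas i).ennreal_ofReal hgE]
          rfl
      _ = ∫⁻ x, ENNReal.ofReal (‖f x - fML x‖ * P x) ∂volume := by
          have h1 : ∀ i : Fin N, ENNReal.ofReal (α i) *
              ∫⁻ x, ENNReal.ofReal (p i x) * ENNReal.ofReal ‖f x - fML x‖ ∂volume
              = ∫⁻ x, ENNReal.ofReal (α i) *
                  (ENNReal.ofReal (p i x) * ENNReal.ofReal ‖f x - fML x‖) ∂volume :=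
            fun i => (lintegral_const_mul _ ((hp_meas i).ennreal_ofReal.mul hgE)).symm
          rw [Finset.sum_congr rfl fun i _ => h1 i,
            ← lintegral_finset_sum _ fun i _ =>
              (show Measurable fun x => ENNReal.ofReal (α i) *
                (ENNReal.ofReal (p i x) * ENNReal.ofReal ‖f x - fML x‖) from
              ((hp_meas i).ennreal_ofReal.mul hgE).const_mul _)]
          refine lintegral_congr fun x => ?_
          rw [ENNReal.ofReal_mul (norm_nonneg _), hP,
            ENNReal.ofReal_sum_of_nonneg fun i _ => mul_nonneg (hα i) (hp_nonneg i x),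
            Finset.mul_sum]
          refine Finset.sum_congr rfl fun i _ => ?_
          rw [ENNReal.ofReal_mul (hα i)]
          ring
      _ ≤ ∫⁻ x, ENNReal.ofReal (C * ∑ i, α i * p i x * ‖x - μ i‖ ^ 2) ∂volume :=
          lintegral_mono fun x => ENNReal.ofReal_le_ofReal (hpt x)
      _ = ∑ i, (ENNReal.ofReal C * ENNReal.ofReal (α i)) *
            ∫⁻ x, ENNReal.ofReal (p i x) * ENNReal.ofReal (‖x - μ i‖ ^ 2) ∂volume := by
          have hm2 : ∀ i : Fin N, Measurable fun x : EuclideanSpace ℝ (Fin n) =>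
              ENNReal.ofReal (p i x) * ENNReal.ofReal (‖x - μ i‖ ^ 2) := fun i =>
            (hp_meas i).ennreal_ofReal.mul
              (((continuous_id.sub continuous_const).norm.pow 2).measurable.ennreal_ofReal)
          have h1 : ∀ i : Fin N, (ENNReal.ofReal C * ENNReal.ofReal (α i)) *
              ∫⁻ x, ENNReal.ofReal (p i x) * ENNReal.ofReal (‖x - μ i‖ ^ 2) ∂volume
              = ∫⁻ x, (ENNReal.ofReal C * ENNReal.ofReal (α i)) *
                  (ENNReal.ofReal (p i x) * ENNReal.ofReal (‖x - μ i‖ ^ 2)) ∂volume :=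
            fun i => (lintegral_const_mul _ (hm2 i)).symm
          rw [Finset.sum_congr rfl fun i _ => h1 i,
            ← lintegral_finset_sum _ fun i _ => ((hm2 i).const_mul _)]
          refine lintegral_congr fun x => ?_
          rw [ENNReal.ofReal_mul hC,
            ENNReal.ofReal_sum_of_nonneg fun i _ =>
              mul_nonneg (mul_nonneg (hα i) (hp_nonneg i x)) (sq_nonneg _),
            Finset.mul_sum]
          refine Finset.sum_congr rfl fun i _ => ?_
          rw [ENNReal.ofReal_mul (mul_nonneg (hα i) (hp_nonneg i x)),
            ENNReal.ofReal_mul (hα i)]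
          ring
      _ = ∑ i, (ENNReal.ofReal C * ENNReal.ofReal (α i)) *
            ENNReal.ofReal (∫ x, ‖x - μ i‖ ^ 2 ∂(ν i)) := by
          refine Finset.sum_congr rfl fun i _ => ?_
          congr 1
          rw [ofReal_integral_eq_lintegral_ofReal (hsqint i (μ i))
            (Filter.Eventually.of_forall fun x => sq_nonneg _)]
          conv_rhs => rw [hdens i]
          have hm : Measurable (fun x : EuclideanSpace ℝ (Fin n) =>
              ENNReal.ofReal (‖x - μ i‖ ^ 2)) := by fun_prop
          rw [lintegral_withDensity_eq_lintegral_mul volume (hp_meas i).ennreal_ofReal hm]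
          rfl
      _ = ENNReal.ofReal (C * ∑ i, α i * ∫ x, ‖x - μ i‖ ^ 2 ∂(ν i)) := by
          rw [ENNReal.ofReal_mul hC,
            ENNReal.ofReal_sum_of_nonneg fun i _ => mul_nonneg (hα i)
              (integral_nonneg fun x => sq_nonneg _), Finset.mul_sum]
          refine Finset.sum_congr rfl fun i _ => ?_
          rw [ENNReal.ofReal_mul (hα i)]
          ring
  · -- part 2
    have hexp : ∫ x, ‖x - μbar‖ ^ 2 ∂(∑ i, ENNReal.ofReal (α i) • ν i)
        = ∑ i, α i * ∫ x, ‖x - μbar‖ ^ 2 ∂(ν i) := by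
      rw [integral_finset_sum_measure (fun i _ =>
        ((integrable_sq_norm_sub (ν i) (hmom2 i) μbar).smul_measure ENNReal.ofReal_ne_top))]
      refine Finset.sum_congr rfl fun i _ => ?_
      rw [integral_smul_measure, ENNReal.toReal_ofReal (hα i), smul_eq_mul]
    rw [hexp]
    refine mul_le_mul_of_nonneg_left (Finset.sum_le_sum fun i _ => ?_) hC
    refine mul_le_mul_of_nonneg_left ?_ (hα i)
    have hvb := var_bias (ν i) (hmom1 i) (hmom2 i) μbar
    rw [← hμ i] at hvb
    rw [hvb]
    nlinarith [sq_nonneg ‖μ i - μbar‖]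
end

section
/- (Theorem 2 of the paper.) Let ν_1, …, ν_N be probability measures on ℝⁿ with finite first moments, α_1, …, α_N ≥ 0 with Σ_i α_i = 1, ρ = Σ_i α_i ν_i, component means μ_i = ∫ x dν_i(x), mixture mean μ = Σ_i α_i μ_i, and assume each ν_i has a density p_i with respect to Lebesgue measure. Let f : ℝⁿ → ℝᵐ be differentiable with each component function f⁽ᵏ⁾ : ℝⁿ → ℝ either convex on ℝⁿ or concave on ℝⁿ, and assume each f⁽ᵏ⁾ is integrable with respect to each ν_i. Then the multiple-linearization approximation is at least as accurate as the single linearization in expected 1-norm: ∫ ‖f(x) − f_ML(x)‖₁ dρ(x) ≤ ∫ ‖f(x) − ℓ_μ f(x)‖₁ dρ(x), where ‖y‖₁ = Σ_k |y_k|. -/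
open MeasureTheory
open scoped ENNReal NNReal

section aux
variable {Ω : Type*} [MeasurableSpace Ω] {X : Type*} [NormedAddCommGroup X] [NormedSpace ℝ X]
  {N : ℕ} (ν : Fin N → Measure Ω) (α : Fin N → ℝ)

omit [NormedSpace ℝ X] in
lemma aux_integrable_mix {F : Ω → X} (hF : ∀ i, Integrable F (ν i)) :
    Integrable F (∑ i, ENNReal.ofReal (α i) • ν i) :=
  integrable_finset_sum_measure.2 fun i _ => (hF i).smul_measure ENNReal.ofReal_ne_top

lemma aux_integral_mix (hα : ∀ i, 0 ≤ α i) {F : Ω → X} (hF : ∀ i, Integrable F (ν i)) :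
    ∫ x, F x ∂(∑ i, ENNReal.ofReal (α i) • ν i) = ∑ i, α i • ∫ x, F x ∂(ν i) := by
  rw [integral_finset_sum_measure fun i _ => (hF i).smul_measure ENNReal.ofReal_ne_top]
  refine Finset.sum_congr rfl fun i _ => ?_
  rw [integral_smul_measure, ENNReal.toReal_ofReal (hα i)]
end aux

/-- Tangent plane below a convex function. -/
lemma tangent_le_of_convexOn {E : Type*} [NormedAddCommGroup E] [NormedSpace ℝ E]
    {g : E → ℝ} (hg : ConvexOn ℝ Set.univ g) {L : E →L[ℝ] ℝ} {a : E}
    (hL : HasFDerivAt g L a) (x : E) : g a + L (x - a) ≤ g x := by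
  set v := x - a with hv
  have hline : ∀ t : ℝ, (AffineMap.lineMap a (a + v) : ℝ →ᵃ[ℝ] E) t = a + t • v := by
    intro t; simp [AffineMap.lineMap_apply, hv, add_comm]
  have hφc : ConvexOn ℝ Set.univ (g ∘ (AffineMap.lineMap a (a + v) : ℝ →ᵃ[ℝ] E)) := by
    simpa using hg.comp_affineMap (AffineMap.lineMap a (a + v))
  have hcurve : HasDerivAt (fun t : ℝ => a + t • v) v 0 := by
    simpa using ((hasDerivAt_id (0:ℝ)).smul_const v).const_add a
  have hφd : HasDerivAt (fun t : ℝ => g (a + t • v)) (L v) 0 := by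
    have hL' : HasFDerivAt g L (a + (0:ℝ) • v) := by simpa using hL
    exact hL'.comp_hasDerivAt (x := (0:ℝ)) hcurve
  have hφc' : ConvexOn ℝ Set.univ (fun t : ℝ => g (a + t • v)) := by
    have : (g ∘ (AffineMap.lineMap a (a + v) : ℝ →ᵃ[ℝ] E)) = fun t : ℝ => g (a + t • v) := by
      funext t; simp [Function.comp, hline t]
    rwa [this] at hφc
  have key : L v ≤ slope (fun t : ℝ => g (a + t • v)) 0 1 :=
    hφc'.le_slope_of_hasDerivAt (Set.mem_univ (0:ℝ)) (Set.mem_univ (1:ℝ)) one_pos hφd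
  have : L v ≤ g (a + (1:ℝ) • v) - g (a + (0:ℝ) • v) := by
    simpa [slope_def_field] using key
  simp only [one_smul, zero_smul, add_zero] at this
  have hx : a + v = x := by simp [hv]
  rw [hx] at this
  linarith

/-- Core scalar lemma. -/
lemma core_scalar {n N : ℕ}
    (ν : Fin N → Measure (EuclideanSpace ℝ (Fin n)))
    (hprob : ∀ i, IsProbabilityMeasure (ν i))
    (α : Fin N → ℝ) (hα : ∀ i, 0 ≤ α i) (hαsum : ∑ i, α i = 1)
    (p : Fin N → EuclideanSpace ℝ (Fin n) → ℝ)
    (hp_meas : ∀ i, Measurable (p i)) (hp_nonneg : ∀ i x, 0 ≤ p i x)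
    (hdens : ∀ i, ν i = volume.withDensity (fun x => ENNReal.ofReal (p i x)))
    (μ : Fin N → EuclideanSpace ℝ (Fin n)) (hμ : ∀ i, μ i = ∫ x, x ∂(ν i))
    (μbar : EuclideanSpace ℝ (Fin n)) (hμbar : μbar = ∑ i, α i • μ i)
    (hmom1 : ∀ i, Integrable (fun x => x) (ν i))
    (g : EuclideanSpace ℝ (Fin n) → ℝ)
    (hg_cvx : ConvexOn ℝ Set.univ g)
    (L : EuclideanSpace ℝ (Fin n) → (EuclideanSpace ℝ (Fin n) →L[ℝ] ℝ))
    (hL : ∀ a, HasFDerivAt g (L a) a)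
    (hg_int : ∀ i, Integrable g (ν i))
    (h : EuclideanSpace ℝ (Fin n) → ℝ)
    (hh : ∀ x, h x = if 0 < ∑ i, α i * p i x then
        ∑ i, ((α i * p i x) / (∑ j, α j * p j x)) * (g (μ i) + L (μ i) (x - μ i)) else 0) :
    Integrable (fun x => |g x - h x|) (∑ i, ENNReal.ofReal (α i) • ν i) ∧
    Integrable (fun x => |g x - (g μbar + L μbar (x - μbar))|) (∑ i, ENNReal.ofReal (α i) • ν i) ∧
    ∫ x, |g x - h x| ∂(∑ i, ENNReal.ofReal (α i) • ν i)
      ≤ ∫ x, |g x - (g μbar + L μbar (x - μbar))| ∂(∑ i, ENNReal.ofReal (α i) • ν i) := by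
  set ρ : Measure (EuclideanSpace ℝ (Fin n)) := ∑ i, ENNReal.ofReal (α i) • ν i with hρ
  set S : EuclideanSpace ℝ (Fin n) → ℝ := fun x => ∑ i, α i * p i x with hS
  set ℓ : Fin N → EuclideanSpace ℝ (Fin n) → ℝ := fun i x => g (μ i) + L (μ i) (x - μ i) with hℓ
  -- continuity facts
  have hg_cont : Continuous g := by
    have : Differentiable ℝ g := fun a => (hL a).differentiableAt
    exact this.continuous
  have hℓ_cont : ∀ i, Continuous (ℓ i) := by
    intro i
    exact continuous_const.add ((L (μ i)).continuous.comp (continuous_id.sub continuous_const))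
  -- tangent inequality
  have ht : ∀ a x, g a + L a (x - a) ≤ g x := fun a x =>
    tangent_le_of_convexOn hg_cvx (hL a) x
  have htℓ : ∀ i x, ℓ i x ≤ g x := fun i x => ht (μ i) x
  -- integrability of ℓ i w.r.t. each ν j
  have hℓ_int : ∀ i j, Integrable (ℓ i) (ν j) := by
    intro i j
    have h1 : Integrable (fun x => x - μ i) (ν j) := (hmom1 j).sub (integrable_const _)
    exact (integrable_const _).add ((L (μ i)).integrable_comp h1)
  -- affine integral computation
  have hint_aff : ∀ (a c : EuclideanSpace ℝ (Fin n)) (i : Fin N),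
      ∫ x, (g a + L a (x - c)) ∂(ν i) = g a + L a (μ i - c) := by
    intro a c i
    have h1 : Integrable (fun x : EuclideanSpace ℝ (Fin n) => x - c) (ν i) := (hmom1 i).sub (integrable_const c)
    rw [integral_add (integrable_const _) ((L a).integrable_comp h1)]
    have := hprob i
    rw [integral_const, probReal_univ, one_smul,
      ContinuousLinearMap.integral_comp_comm _ h1,
      integral_sub (hmom1 i) (integrable_const c), integral_const, probReal_univ,
      one_smul, ← hμ i]
  -- S basic facts
  have hS_nonneg : ∀ x, 0 ≤ S x :=
    fun x => Finset.sum_nonneg fun i _ => mul_nonneg (hα i) (hp_nonneg i x)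
  have hterm_nonneg : ∀ i x, 0 ≤ α i * p i x := fun i x => mul_nonneg (hα i) (hp_nonneg i x)
  have hterm_le : ∀ i x, α i * p i x ≤ S x := by
    intro i x
    exact Finset.single_le_sum (fun j _ => hterm_nonneg j x) (Finset.mem_univ i)
  -- h is bounded and below g where S > 0
  have h_le_g : ∀ x, 0 < S x → h x ≤ g x := by
    intro x hx
    rw [hh x, if_pos hx]
    calc ∑ i, ((α i * p i x) / S x) * ℓ i x
        ≤ ∑ i, ((α i * p i x) / S x) * g x := by
          refine Finset.sum_le_sum fun i _ => ?_
          exact mul_le_mul_of_nonneg_left (htℓ i x) (div_nonneg (hterm_nonneg i x) (hS_nonneg x))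
      _ = g x := by
          rw [← Finset.sum_mul, ← Finset.sum_div, div_self hx.ne', one_mul]
  have h_abs_le : ∀ x, |h x| ≤ ∑ i, |ℓ i x| := by
    intro x
    rw [hh x]
    split_ifs with hx
    · calc |∑ i, ((α i * p i x) / S x) * ℓ i x|
          ≤ ∑ i, |((α i * p i x) / S x) * ℓ i x| := Finset.abs_sum_le_sum_abs _ _
        _ ≤ ∑ i, |ℓ i x| := by
            refine Finset.sum_le_sum fun i _ => ?_
            rw [abs_mul]
            have hw1 : (α i * p i x) / S x ≤ 1 := div_le_one_of_le₀ (hterm_le i x) (hS_nonneg x)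
            have hw0 : 0 ≤ (α i * p i x) / S x := div_nonneg (hterm_nonneg i x) (hS_nonneg x)
            calc |(α i * p i x) / S x| * |ℓ i x| = ((α i * p i x) / S x) * |ℓ i x| := by
                  rw [abs_of_nonneg hw0]
              _ ≤ 1 * |ℓ i x| := mul_le_mul_of_nonneg_right hw1 (abs_nonneg _)
              _ = |ℓ i x| := one_mul _
    · simp only [abs_zero]
      exact Finset.sum_nonneg fun i _ => abs_nonneg _
  -- measurability of h
  have hS_meas : Measurable S := by
    exact Finset.measurable_sum _ fun i _ => (hp_meas i).const_mul (α i)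
  have hh_meas : Measurable h := by
    have : h = fun x => if 0 < S x then ∑ i, ((α i * p i x) / S x) * ℓ i x else 0 := by
      funext x; exact hh x
    rw [this]
    refine Measurable.ite (measurableSet_lt measurable_const hS_meas) ?_ measurable_const
    refine Finset.measurable_sum _ fun i _ => ?_
    exact (((hp_meas i).const_mul (α i)).div hS_meas).mul (hℓ_cont i).measurable
  -- integrability of h
  have hh_int : ∀ j, Integrable h (ν j) := by
    intro j
    refine Integrable.mono' (f := h) (g := fun x => ∑ i, |ℓ i x|)
      (integrable_finset_sum _ fun i _ => (hℓ_int i j).abs) hh_meas.aestronglyMeasurable ?_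
    filter_upwards with x
    simpa [Real.norm_eq_abs] using h_abs_le x
  -- integrability over ρ
  have hg_int_ρ : Integrable g ρ := aux_integrable_mix ν α hg_int
  have hh_int_ρ : Integrable h ρ := aux_integrable_mix ν α hh_int
  have hℓbar_int : ∀ j, Integrable (fun x => g μbar + L μbar (x - μbar)) (ν j) := by
    intro j
    have h1 : Integrable (fun x => x - μbar) (ν j) := (hmom1 j).sub (integrable_const _)
    exact (integrable_const _).add ((L μbar).integrable_comp h1)
  have hℓbar_int_ρ : Integrable (fun x => g μbar + L μbar (x - μbar)) ρ :=
    aux_integrable_mix ν α hℓbar_int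
  have hA_int : Integrable (fun x => |g x - h x|) ρ := (hg_int_ρ.sub hh_int_ρ).abs
  have hB_int : Integrable (fun x => |g x - (g μbar + L μbar (x - μbar))|) ρ :=
    (hg_int_ρ.sub hℓbar_int_ρ).abs
  refine ⟨hA_int, hB_int, ?_⟩
  -- a.e. positivity of S under ρ
  have hbad_meas : MeasurableSet {x | ¬ 0 < S x} :=
    (measurableSet_lt measurable_const hS_meas).compl
  have hS_zero : ∀ x, ¬ 0 < S x → S x = 0 := fun x hx => le_antisymm (not_lt.1 hx) (hS_nonneg x)
  have hae : ∀ᵐ x ∂ρ, 0 < S x := by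
    rw [ae_iff, hρ]
    have hcoe : (∑ i, ENNReal.ofReal (α i) • ν i) {x | ¬ 0 < S x}
        = ∑ i, ENNReal.ofReal (α i) * (ν i {x | ¬ 0 < S x}) := by
      simp [Measure.finset_sum_apply, Measure.smul_apply, smul_eq_mul]
    rw [hcoe]
    refine Finset.sum_eq_zero fun i _ => ?_
    rcases eq_or_lt_of_le (hα i) with hai | hai
    · rw [← hai]; simp
    · have hνi : ν i {x | ¬ 0 < S x} = 0 := by
        rw [hdens i, withDensity_apply _ hbad_meas]
        have : ∀ᵐ x ∂volume, x ∈ {x | ¬ 0 < S x} → ENNReal.ofReal (p i x) = 0 := by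
          filter_upwards with x hx
          have hSx := hS_zero x hx
          have hterm : α i * p i x = 0 := by
            have := (Finset.sum_eq_zero_iff_of_nonneg
              (fun j _ => hterm_nonneg j x)).1 hSx i (Finset.mem_univ i)
            exact this
          have hpi : p i x = 0 := by
            rcases mul_eq_zero.1 hterm with hc | hc
            · exact absurd hc hai.ne'
            · exact hc
          simp [hpi]
        rw [setLIntegral_congr_fun_ae hbad_meas this, lintegral_zero]
      rw [hνi, mul_zero]
  -- integral transfer between ν j and volume
  have hνint : ∀ (j : Fin N) (F : EuclideanSpace ℝ (Fin n) → ℝ),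
      ∫ x, F x ∂(ν j) = ∫ x, p j x * F x := by
    intro j F
    rw [hdens j]
    have hm : Measurable (fun x => (p j x).toNNReal) := (hp_meas j).real_toNNReal
    rw [show (fun x => ENNReal.ofReal (p j x))
        = (fun x => ((fun y => (p j y).toNNReal) x : ℝ≥0∞)) from rfl]
    rw [integral_withDensity_eq_integral_smul hm F]
    congr 1; funext x
    rw [NNReal.smul_def, Real.coe_toNNReal _ (hp_nonneg j x), smul_eq_mul]
  have hνint_iff : ∀ (j : Fin N) (F : EuclideanSpace ℝ (Fin n) → ℝ),
      Integrable F (ν j) → Integrable (fun x => p j x * F x) volume := by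
    intro j F hF
    rw [hdens j] at hF
    have hm : Measurable (fun x => (p j x).toNNReal) := (hp_meas j).real_toNNReal
    rw [show (fun x => ENNReal.ofReal (p j x))
        = (fun x => ((fun y => (p j y).toNNReal) x : ℝ≥0∞)) from rfl] at hF
    have := (integrable_withDensity_iff_integrable_smul hm).1 hF
    refine this.congr ?_
    filter_upwards with x
    rw [NNReal.smul_def, Real.coe_toNNReal _ (hp_nonneg j x), smul_eq_mul]
  -- key affine sum computation
  have hsum0 : ∑ i, α i • (μ i - μbar) = (0 : EuclideanSpace ℝ (Fin n)) := by
    have : ∀ i : Fin N, α i • (μ i - μbar) = α i • μ i - α i • μbar := fun i => smul_sub _ _ _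
    rw [Finset.sum_congr rfl fun i _ => this i, Finset.sum_sub_distrib, ← hμbar,
      ← Finset.sum_smul, hαsum, one_smul, sub_self]
  have key0 : ∑ i, α i * (g μbar + L μbar (μ i - μbar)) = g μbar := by
    have hterm : ∀ i : Fin N, α i * (g μbar + L μbar (μ i - μbar))
        = α i * g μbar + L μbar (α i • (μ i - μbar)) := by
      intro i
      rw [mul_add, (L μbar).map_smul, smul_eq_mul]
    rw [Finset.sum_congr rfl fun i _ => hterm i, Finset.sum_add_distrib,
      ← Finset.sum_mul, hαsum, one_mul, ← map_sum, hsum0, map_zero, add_zero]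
  -- Jensen-type inequality
  have key2 : g μbar ≤ ∑ i, α i * g (μ i) := by
    calc g μbar = ∑ i, α i * (g μbar + L μbar (μ i - μbar)) := key0.symm
      _ ≤ ∑ i, α i * g (μ i) :=
        Finset.sum_le_sum fun i _ => mul_le_mul_of_nonneg_left (ht μbar (μ i)) (hα i)
  -- integral of single linearization
  have key1 : ∫ x, (g μbar + L μbar (x - μbar)) ∂ρ = g μbar := by
    rw [hρ, aux_integral_mix ν α hα hℓbar_int]
    rw [Finset.sum_congr rfl fun i _ => by rw [hint_aff μbar μbar i]]
    simpa [smul_eq_mul] using key0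
  -- integral of h
  have key3 : ∫ x, h x ∂ρ = ∑ i, α i * g (μ i) := by
    rw [hρ, aux_integral_mix ν α hα hh_int]
    have step1 : ∀ i : Fin N, α i • ∫ x, h x ∂(ν i) = ∫ x, α i * (p i x * h x) := by
      intro i
      rw [hνint i h, smul_eq_mul, ← integral_const_mul]
    rw [Finset.sum_congr rfl fun i _ => step1 i]
    have hint_pih : ∀ i : Fin N, Integrable (fun x => α i * (p i x * h x)) volume :=
      fun i => (hνint_iff i h (hh_int i)).const_mul _
    have hint_piℓ : ∀ i : Fin N, Integrable (fun x => α i * (p i x * ℓ i x)) volume :=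
      fun i => (hνint_iff i (ℓ i) (hℓ_int i i)).const_mul _
    rw [← integral_finset_sum _ fun i _ => hint_pih i]
    have hpt : ∀ x, ∑ i, α i * (p i x * h x) = ∑ i, α i * (p i x * ℓ i x) := by
      intro x
      by_cases hx : 0 < S x
      · have hhx : h x = ∑ i, ((α i * p i x) / S x) * ℓ i x := by rw [hh x, if_pos hx]
        have hne : S x ≠ 0 := hx.ne'
        have lhs : ∑ i, α i * (p i x * h x) = S x * h x := by
          simp only [← mul_assoc]
          rw [← Finset.sum_mul]
        rw [lhs, hhx, Finset.mul_sum]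
        refine Finset.sum_congr rfl fun i _ => ?_
        field_simp
      · have hSx := hS_zero x hx
        have hhx : h x = 0 := by rw [hh x, if_neg hx]
        have hz : ∀ i : Fin N, α i * p i x = 0 := fun i =>
          (Finset.sum_eq_zero_iff_of_nonneg (fun j _ => hterm_nonneg j x)).1 hSx i
            (Finset.mem_univ i)
        refine Finset.sum_congr rfl fun i _ => ?_
        rw [hhx]
        simp only [mul_zero]
        rw [← mul_assoc, hz i, zero_mul]
    rw [integral_congr_ae (Filter.Eventually.of_forall hpt)]
    rw [integral_finset_sum _ fun i _ => hint_piℓ i]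
    refine Finset.sum_congr rfl fun i _ => ?_
    have : ∫ x, α i * (p i x * ℓ i x) = α i * ∫ x, p i x * ℓ i x := integral_const_mul _ _
    rw [this, ← hνint i (ℓ i)]
    have := hint_aff (μ i) (μ i) i
    rw [sub_self, map_zero, add_zero] at this
    rw [show (∫ x, ℓ i x ∂(ν i)) = g (μ i) from this]
  -- put everything together
  have habsA : ∫ x, |g x - h x| ∂ρ = ∫ x, (g x - h x) ∂ρ := by
    refine integral_congr_ae ?_
    filter_upwards [hae] with x hx
    rw [abs_of_nonneg (sub_nonneg.2 (h_le_g x hx))]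
  have habsB : ∫ x, |g x - (g μbar + L μbar (x - μbar))| ∂ρ
      = ∫ x, (g x - (g μbar + L μbar (x - μbar))) ∂ρ := by
    refine integral_congr_ae (Filter.Eventually.of_forall fun x => ?_)
    exact abs_of_nonneg (sub_nonneg.2 (ht μbar x))
  calc ∫ x, |g x - h x| ∂ρ = ∫ x, (g x - h x) ∂ρ := habsA
    _ = (∫ x, g x ∂ρ) - ∫ x, h x ∂ρ := integral_sub hg_int_ρ hh_int_ρ
    _ ≤ (∫ x, g x ∂ρ) - g μbar := by rw [key3]; linarith
    _ = (∫ x, g x ∂ρ) - ∫ x, (g μbar + L μbar (x - μbar)) ∂ρ := by rw [key1]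
    _ = ∫ x, (g x - (g μbar + L μbar (x - μbar))) ∂ρ := (integral_sub hg_int_ρ hℓbar_int_ρ).symm
    _ = ∫ x, |g x - (g μbar + L μbar (x - μbar))| ∂ρ := habsB.symm

/-- Theorem 2 of the paper: for a mixture `ρ = Σ_i α_i ν_i` with component means `μ_i`
and mixture mean `μ`, if every component `f⁽ᵏ⁾` of the differentiable map `f` is
(globally) convex or concave and integrable w.r.t. each `ν_i`, then the
multiple-linearization approximation is at least as accurate as the single
linearization in expected 1-norm:
`∫ ‖f − f_ML‖₁ dρ ≤ ∫ ‖f − ℓ_μ f‖₁ dρ`. -/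
theorem multiple_linearization_beats_single_linearization {n m N : ℕ}
    (ν : Fin N → Measure (EuclideanSpace ℝ (Fin n)))
    (hprob : ∀ i, IsProbabilityMeasure (ν i))
    (α : Fin N → ℝ) (hα : ∀ i, 0 ≤ α i) (hαsum : ∑ i, α i = 1)
    (p : Fin N → EuclideanSpace ℝ (Fin n) → ℝ)
    (hp_meas : ∀ i, Measurable (p i)) (hp_nonneg : ∀ i x, 0 ≤ p i x)
    (hdens : ∀ i, ν i = volume.withDensity (fun x => ENNReal.ofReal (p i x)))
    (μ : Fin N → EuclideanSpace ℝ (Fin n))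
    (hμ : ∀ i, μ i = ∫ x, x ∂(ν i))
    (μbar : EuclideanSpace ℝ (Fin n)) (hμbar : μbar = ∑ i, α i • μ i)
    (hmom1 : ∀ i, Integrable (fun x => x) (ν i))
    (f : EuclideanSpace ℝ (Fin n) → EuclideanSpace ℝ (Fin m))
    (hf : Differentiable ℝ f)
    (hconvconc : ∀ k : Fin m,
      ConvexOn ℝ Set.univ (fun x => f x k) ∨ ConcaveOn ℝ Set.univ (fun x => f x k))
    (hint : ∀ (k : Fin m) (i : Fin N), Integrable (fun x => f x k) (ν i))
    (fML : EuclideanSpace ℝ (Fin n) → EuclideanSpace ℝ (Fin m))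
    (hfML : ∀ x, fML x =
      if 0 < ∑ i, α i * p i x then
        ∑ i, ((α i * p i x) / (∑ j, α j * p j x)) •
          (f (μ i) + fderiv ℝ f (μ i) (x - μ i))
      else 0) :
    ∫ x, ∑ k, |f x k - fML x k| ∂(∑ i, ENNReal.ofReal (α i) • ν i)
      ≤ ∫ x, ∑ k, |f x k - (f μbar + fderiv ℝ f μbar (x - μbar)) k|
          ∂(∑ i, ENNReal.ofReal (α i) • ν i) := by
  have hcoord : ∀ (k : Fin m) (x : EuclideanSpace ℝ (Fin n)), 0 < ∑ i, α i * p i x →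
      fML x k = ∑ i, ((α i * p i x) / (∑ j, α j * p j x)) *
        (f (μ i) k + (fderiv ℝ f (μ i)) (x - μ i) k) := by
    intro k x hx
    rw [hfML x, if_pos hx, WithLp.ofLp_sum, Finset.sum_apply]
    refine Finset.sum_congr rfl fun i _ => ?_
    simp [PiLp.smul_apply, PiLp.add_apply, smul_eq_mul, mul_add]
  have hcoord0 : ∀ (k : Fin m) (x : EuclideanSpace ℝ (Fin n)), ¬ 0 < ∑ i, α i * p i x →
      fML x k = 0 := by
    intro k x hx
    rw [hfML x, if_neg hx]
    rfl
  have hmain : ∀ k : Fin m,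
      Integrable (fun x => |f x k - fML x k|) (∑ i, ENNReal.ofReal (α i) • ν i) ∧
      Integrable (fun x => |f x k - (f μbar + fderiv ℝ f μbar (x - μbar)) k|)
        (∑ i, ENNReal.ofReal (α i) • ν i) ∧
      ∫ x, |f x k - fML x k| ∂(∑ i, ENNReal.ofReal (α i) • ν i)
        ≤ ∫ x, |f x k - (f μbar + fderiv ℝ f μbar (x - μbar)) k|
            ∂(∑ i, ENNReal.ofReal (α i) • ν i) := by
    intro k
    rcases hconvconc k with hcvx | hccv
    · -- convex case
      set Lk : EuclideanSpace ℝ (Fin n) → (EuclideanSpace ℝ (Fin n) →L[ℝ] ℝ) :=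
        fun a => (EuclideanSpace.proj k : EuclideanSpace ℝ (Fin m) →L[ℝ] ℝ).comp (fderiv ℝ f a) with hLkdef
      have hLk : ∀ a, HasFDerivAt (fun x => f x k) (Lk a) a := fun a =>
        (EuclideanSpace.proj k : EuclideanSpace ℝ (Fin m) →L[ℝ] ℝ).hasFDerivAt.comp a (hf a).hasFDerivAt
      have hhk : ∀ x, fML x k = if 0 < ∑ i, α i * p i x then
          ∑ i, ((α i * p i x) / (∑ j, α j * p j x)) * (f (μ i) k + Lk (μ i) (x - μ i))
          else 0 := by
        intro x
        split_ifs with hx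
        · rw [hcoord k x hx]
          rfl
        · exact hcoord0 k x hx
      obtain ⟨h1, h2, h3⟩ := core_scalar ν hprob α hα hαsum p hp_meas hp_nonneg hdens μ hμ
        μbar hμbar hmom1 (fun x => f x k) hcvx Lk hLk (hint k) (fun x => fML x k) hhk
      exact ⟨h1, h2, h3⟩
    · -- concave case
      set Lk : EuclideanSpace ℝ (Fin n) → (EuclideanSpace ℝ (Fin n) →L[ℝ] ℝ) :=
        fun a => -((EuclideanSpace.proj k : EuclideanSpace ℝ (Fin m) →L[ℝ] ℝ).comp (fderiv ℝ f a)) with hLkdef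
      have hLk : ∀ a, HasFDerivAt (fun x => -(f x k)) (Lk a) a := fun a =>
        ((EuclideanSpace.proj k : EuclideanSpace ℝ (Fin m) →L[ℝ] ℝ).hasFDerivAt.comp a (hf a).hasFDerivAt).neg
      have hcvx : ConvexOn ℝ Set.univ (fun x => -(f x k)) := hccv.neg
      have hhk : ∀ x, -(fML x k) = if 0 < ∑ i, α i * p i x then
          ∑ i, ((α i * p i x) / (∑ j, α j * p j x)) * (-(f (μ i) k) + Lk (μ i) (x - μ i))
          else 0 := by
        intro x
        split_ifs with hx
        · rw [hcoord k x hx, ← Finset.sum_neg_distrib]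
          refine Finset.sum_congr rfl fun i _ => ?_
          simp only [hLkdef, ContinuousLinearMap.neg_apply, ContinuousLinearMap.comp_apply,
            PiLp.proj_apply, map_sub, PiLp.sub_apply, mul_add, mul_neg, neg_add]
          ring
        · rw [hcoord0 k x hx, neg_zero]
      obtain ⟨h1, h2, h3⟩ := core_scalar ν hprob α hα hαsum p hp_meas hp_nonneg hdens μ hμ
        μbar hμbar hmom1 (fun x => -(f x k)) hcvx Lk hLk (fun i => (hint k i).neg)
        (fun x => -(fML x k)) hhk
      have e1 : (fun x => |-(f x k) - -(fML x k)|) = (fun x => |f x k - fML x k|) := by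
        funext x; rw [neg_sub_neg, abs_sub_comm]
      have e2 : (fun x => |-(f x k) - (-(f μbar k) + Lk μbar (x - μbar))|)
          = (fun x => |f x k - (f μbar + fderiv ℝ f μbar (x - μbar)) k|) := by
        funext x
        have hb : (-(f μbar k) + Lk μbar (x - μbar))
            = -((f μbar + fderiv ℝ f μbar (x - μbar)) k) := by
          simp only [hLkdef, ContinuousLinearMap.neg_apply, ContinuousLinearMap.comp_apply,
            PiLp.proj_apply, map_sub, PiLp.sub_apply, PiLp.add_apply, neg_add]
          ring
        rw [hb, neg_sub_neg, abs_sub_comm]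
      rw [e1] at h1 h3
      rw [e2] at h2 h3
      exact ⟨h1, h2, h3⟩
  rw [integral_finset_sum _ (fun k _ => (hmain k).1),
    integral_finset_sum _ (fun k _ => (hmain k).2.1)]
  exact Finset.sum_le_sum fun k _ => (hmain k).2.2
end

section
/- (Lemma 1 of the paper, vector form.) Let ν be a probability measure on ℝⁿ with finite first moment and mean μ = ∫ x dν(x), and let f : ℝⁿ → ℝᵐ be differentiable with each component function f⁽ᵏ⁾ : ℝⁿ → ℝ either convex on ℝⁿ or concave on ℝⁿ, and each f⁽ᵏ⁾ integrable with respect to ν. Then for every a ∈ ℝⁿ, ∫ ‖f(x) − ℓ_μ f(x)‖₁ dν(x) ≤ ∫ ‖f(x) − ℓ_a f(x)‖₁ dν(x), i.e., among all linearization points, the mean μ of ν minimizes the expected 1-norm linearization error. -/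
open MeasureTheory


variable {E : Type*} [NormedAddCommGroup E] [NormedSpace ℝ E]

lemma support_line {g : E → ℝ} (hg : Differentiable ℝ g)
    (hc : ConvexOn ℝ Set.univ g) (a x : E) :
    g a + fderiv ℝ g a (x - a) ≤ g x := by
  set v := x - a with hv
  have hline : HasDerivAt (fun t : ℝ => t • v + a) v 0 := by
    simpa using ((hasDerivAt_id (0 : ℝ)).smul_const v).add_const a
  have hφ : HasDerivAt (fun t : ℝ => g (t • v + a)) (fderiv ℝ g a v) 0 := by
    have := ((hg ((0:ℝ) • v + a)).hasFDerivAt.comp_hasDerivAt 0 hline)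
    simp only [zero_smul, zero_add] at this
    exact this
  have hconv : ConvexOn ℝ Set.univ (fun t : ℝ => g (t • v + a)) := by
    have h := hc.comp_affineMap (AffineMap.lineMap a x : ℝ →ᵃ[ℝ] E)
    have hfun : (g ∘ AffineMap.lineMap a x) = fun t : ℝ => g (t • v + a) := by
      funext t; simp [AffineMap.lineMap_apply, vsub_eq_sub, vadd_eq_add, hv]
    rw [hfun] at h
    exact h
  have := hconv.le_slope_of_hasDerivAt (Set.mem_univ 0) (Set.mem_univ 1)
    one_pos hφ
  simp only [slope_def_field, hv, sub_add_cancel] at this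
  simp at this
  have h2 : (fderiv ℝ g a) v = (fderiv ℝ g a) x - (fderiv ℝ g a) a := by
    rw [hv]; exact map_sub _ _ _
  linarith [this, h2]

lemma comp_key_convex {n : ℕ} (ν : Measure (EuclideanSpace ℝ (Fin n))) [IsProbabilityMeasure ν]
    (hmom1 : Integrable (fun x => x) ν) (μ : EuclideanSpace ℝ (Fin n)) (hμ : μ = ∫ x, x ∂ν)
    (g : EuclideanSpace ℝ (Fin n) → ℝ) (hg : Differentiable ℝ g)
    (hc : ConvexOn ℝ Set.univ g)
    (hint : Integrable g ν) (a : EuclideanSpace ℝ (Fin n)) :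
    ∫ x, |g x - (g μ + fderiv ℝ g μ (x - μ))| ∂ν
      ≤ ∫ x, |g x - (g a + fderiv ℝ g a (x - a))| ∂ν := by
  have key : ∀ b, ∫ x, |g x - (g b + fderiv ℝ g b (x - b))| ∂ν
      = ∫ x, g x ∂ν - (g b + fderiv ℝ g b (μ - b)) := by
    intro b
    set L := fderiv ℝ g b with hL
    have hsub : Integrable (fun x => x - b) ν := hmom1.sub (integrable_const b)
    have hLint : Integrable (fun x => L (x - b)) ν := L.integrable_comp hsub
    have h1 : ∀ x, |g x - (g b + L (x - b))| = g x - (g b + L (x - b)) := fun x =>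
      abs_of_nonneg (by have := support_line hg hc b x; linarith)
    have hIL : ∫ x, L (x - b) ∂ν = L (μ - b) := by
      rw [L.integral_comp_comm hsub, integral_sub hmom1 (integrable_const b), integral_const]
      simp [hμ]
    have hgb : Integrable (fun x => g x - g b) ν := hint.sub (integrable_const _)
    simp_rw [h1, sub_add_eq_sub_sub]
    rw [integral_sub hgb hLint,
      integral_sub hint (integrable_const _), integral_const, hIL]
    simp [measure_univ]
  rw [key μ, key a]
  have h1 := support_line hg hc a μ
  have h2 : fderiv ℝ g μ (μ - μ) = 0 := by simp
  linarith [h1, h2]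

lemma comp_key {n : ℕ} (ν : Measure (EuclideanSpace ℝ (Fin n))) [IsProbabilityMeasure ν]
    (hmom1 : Integrable (fun x => x) ν) (μ : EuclideanSpace ℝ (Fin n)) (hμ : μ = ∫ x, x ∂ν)
    (g : EuclideanSpace ℝ (Fin n) → ℝ) (hg : Differentiable ℝ g)
    (hcc : ConvexOn ℝ Set.univ g ∨ ConcaveOn ℝ Set.univ g)
    (hint : Integrable g ν) (a : EuclideanSpace ℝ (Fin n)) :
    ∫ x, |g x - (g μ + fderiv ℝ g μ (x - μ))| ∂ν
      ≤ ∫ x, |g x - (g a + fderiv ℝ g a (x - a))| ∂ν := by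
  rcases hcc with hc | hc
  · exact comp_key_convex ν hmom1 μ hμ g hg hc hint a
  · have hc' : ConvexOn ℝ Set.univ (fun x => -g x) := hc.neg
    have hg' : Differentiable ℝ (fun x => -g x) := hg.neg
    have heq : ∀ b x, |(-g x) - ((-g b) + fderiv ℝ (fun y => -g y) b (x - b))|
        = |g x - (g b + fderiv ℝ g b (x - b))| := by
      intro b x
      rw [fderiv_fun_neg]
      simp only [ContinuousLinearMap.neg_apply]
      rw [← abs_neg]
      ring_nf
    have := comp_key_convex ν hmom1 μ hμ (fun x => -g x) hg' hc' hint.neg a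
    simp_rw [heq] at this
    exact this

/-- Lemma 1 of the paper (vector form): if every component `f⁽ᵏ⁾` of the differentiable
map `f` is globally convex or concave and integrable w.r.t. the probability measure `ν`
with mean `μ`, then among all linearization points the mean `μ` minimizes the expected
1-norm linearization error:
`∫ ‖f − ℓ_μ f‖₁ dν ≤ ∫ ‖f − ℓ_a f‖₁ dν` for every `a`. -/
theorem mean_minimizes_expected_one_norm_linearization_error {n m : ℕ}
    (ν : Measure (EuclideanSpace ℝ (Fin n))) [IsProbabilityMeasure ν]
    (hmom1 : Integrable (fun x => x) ν)
    (μ : EuclideanSpace ℝ (Fin n)) (hμ : μ = ∫ x, x ∂ν)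
    (f : EuclideanSpace ℝ (Fin n) → EuclideanSpace ℝ (Fin m))
    (hf : Differentiable ℝ f)
    (hconvconc : ∀ k : Fin m,
      ConvexOn ℝ Set.univ (fun x => f x k) ∨ ConcaveOn ℝ Set.univ (fun x => f x k))
    (hint : ∀ k : Fin m, Integrable (fun x => f x k) ν) :
    ∀ a : EuclideanSpace ℝ (Fin n),
      ∫ x, ∑ k, |f x k - (f μ + fderiv ℝ f μ (x - μ)) k| ∂ν
        ≤ ∫ x, ∑ k, |f x k - (f a + fderiv ℝ f a (x - a)) k| ∂ν := by
  intro a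
  have hgk : ∀ k : Fin m, Differentiable ℝ (fun x => f x k) := by
    intro k
    exact fun x => ((EuclideanSpace.proj (𝕜 := ℝ) k).differentiableAt).comp x (hf x)
  have hcomp : ∀ (b : EuclideanSpace ℝ (Fin n)) (k : Fin m),
      fderiv ℝ (fun y => f y k) b
        = (EuclideanSpace.proj (𝕜 := ℝ) k).comp (fderiv ℝ f b) := by
    intro b k
    exact ((EuclideanSpace.proj (𝕜 := ℝ) k).hasFDerivAt.comp b (hf b).hasFDerivAt).fderiv
  have happly : ∀ (b x : EuclideanSpace ℝ (Fin n)) (k : Fin m),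
      (f b + fderiv ℝ f b (x - b)) k = f b k + fderiv ℝ (fun y => f y k) b (x - b) := by
    intro b x k
    rw [hcomp]
    rfl
  have hterm : ∀ (b : EuclideanSpace ℝ (Fin n)) (k : Fin m),
      Integrable (fun x => |f x k - (f b + fderiv ℝ f b (x - b)) k|) ν := by
    intro b k
    have hL : Integrable (fun x => fderiv ℝ (fun y => f y k) b (x - b)) ν :=
      (fderiv ℝ (fun y => f y k) b).integrable_comp (hmom1.sub (integrable_const b))
    have h1 : Integrable (fun x => f x k - (f b k + fderiv ℝ (fun y => f y k) b (x - b))) ν :=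
      (hint k).sub ((integrable_const _).add hL)
    have := h1.abs
    simp_rw [happly]
    exact this
  rw [integral_finset_sum _ (fun k _ => hterm μ k),
    integral_finset_sum _ (fun k _ => hterm a k)]
  apply Finset.sum_le_sum
  intro k _
  have := comp_key ν hmom1 μ hμ (fun x => f x k) (hgk k) (hconvconc k) (hint k) a
  simp_rw [happly]
  exact this
end

section
/- (Lemma 1 of the paper, scalar concave case.) Let ν be a probability measure on ℝⁿ with finite first moment and mean μ = ∫ x dν(x), and let g : ℝⁿ → ℝ be concave, differentiable, and integrable with respect to ν. Then for every a ∈ ℝⁿ, ∫ |g(x) − ℓ_μ g(x)| dν(x) ≤ ∫ |g(x) − ℓ_a g(x)| dν(x). -/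
open MeasureTheory RealInnerProductSpace

private lemma tangent_le_aux {n : ℕ} (g : EuclideanSpace ℝ (Fin n) → ℝ)
    (hconc : ConcaveOn ℝ Set.univ g) (hdiff : Differentiable ℝ g)
    (a x : EuclideanSpace ℝ (Fin n)) : g x ≤ g a + fderiv ℝ g a (x - a) := by
  set φ : ℝ → ℝ := fun t => g (a + t • (x - a)) with hφ
  have hline : ∀ t : ℝ, HasDerivAt (fun t : ℝ => a + t • (x - a)) (x - a) t := by
    intro t
    simpa using ((hasDerivAt_id t).smul_const (x - a)).const_add a
  have hφd : HasDerivAt φ (fderiv ℝ g a (x - a)) 0 := by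
    have := ((hdiff (a + (0:ℝ) • (x - a))).hasFDerivAt.comp_hasDerivAt 0 (hline 0))
    simp only [zero_smul, add_zero] at this
    exact this
  have hφconc : ConcaveOn ℝ Set.univ φ := by
    have := hconc.comp_affineMap (AffineMap.lineMap a x)
    have e : φ = g ∘ AffineMap.lineMap a x := by
      ext t
      simp [AffineMap.lineMap_apply, φ, Function.comp, add_comm]
    rw [e]
    exact this
  have hconv : ConvexOn ℝ Set.univ (fun t => -φ t) := hφconc.neg
  have h01 : (0:ℝ) < 1 := one_pos
  have := ConvexOn.le_slope_of_hasDerivAt hconv trivial trivial h01 hφd.neg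
  have hs : slope (fun t => -φ t) 0 1 = -(φ 1 - φ 0) := by
    simp [slope_def_field]; ring
  rw [hs] at this
  have : φ 1 - φ 0 ≤ fderiv ℝ g a (x - a) := by linarith
  simp only [φ, one_smul, zero_smul, add_zero, map_sub, add_sub_cancel] at this ⊢
  linarith

private lemma grad_inner_aux {n : ℕ} (g : EuclideanSpace ℝ (Fin n) → ℝ)
    (a y : EuclideanSpace ℝ (Fin n)) : ⟪gradient g a, y⟫ = fderiv ℝ g a y := by
  simp [gradient, InnerProductSpace.toDual_symm_apply]

/-- Lemma 1 of the paper (scalar concave case): for a concave differentiable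
`g : ℝⁿ → ℝ`, integrable w.r.t. the probability measure `ν` with mean `μ`,
the expected absolute linearization error is minimized at the mean:
`∫ |g(x) − ℓ_μ g(x)| dν ≤ ∫ |g(x) − ℓ_a g(x)| dν` for every `a`. -/
theorem mean_minimizes_abs_linearization_error_of_concave {n : ℕ}
    (ν : Measure (EuclideanSpace ℝ (Fin n))) [IsProbabilityMeasure ν]
    (hmom1 : Integrable (fun x => x) ν)
    (μ : EuclideanSpace ℝ (Fin n)) (hμ : μ = ∫ x, x ∂ν)
    (g : EuclideanSpace ℝ (Fin n) → ℝ)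
    (hconc : ConcaveOn ℝ Set.univ g)
    (hdiff : Differentiable ℝ g)
    (hint : Integrable g ν) :
    ∀ a : EuclideanSpace ℝ (Fin n),
      ∫ x, |g x - (g μ + ⟪gradient g μ, x - μ⟫)| ∂ν
        ≤ ∫ x, |g x - (g a + ⟪gradient g a, x - a⟫)| ∂ν := by
  intro a
  have hmean : ∀ b : EuclideanSpace ℝ (Fin n), ∫ x, (x - b) ∂ν = μ - b := by
    intro b
    rw [integral_sub hmom1 (integrable_const b), integral_const]
    simp [hμ]
  have key : ∀ b : EuclideanSpace ℝ (Fin n),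
      ∫ x, |g x - (g b + ⟪gradient g b, x - b⟫)| ∂ν
        = (g b + fderiv ℝ g b (μ - b)) - ∫ x, g x ∂ν := by
    intro b
    have hIlin : Integrable (fun x => (fderiv ℝ g b) (x - b)) ν :=
      (fderiv ℝ g b).integrable_comp (hmom1.sub (integrable_const b))
    have h1 : ∀ x, |g x - (g b + ⟪gradient g b, x - b⟫)|
        = (g b + (fderiv ℝ g b) (x - b)) - g x := by
      intro x
      rw [grad_inner_aux, abs_sub_comm, abs_of_nonneg
        (sub_nonneg.2 (tangent_le_aux g hconc hdiff b x))]
    have hI2 : Integrable (fun x => g b + (fderiv ℝ g b) (x - b)) ν :=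
      (integrable_const (g b)).add hIlin
    have hcomm : ∫ x, (fderiv ℝ g b) (x - b) ∂ν = (fderiv ℝ g b) (∫ x, (x - b) ∂ν) :=
      (fderiv ℝ g b).integral_comp_comm (hmom1.sub (integrable_const b))
    rw [integral_congr_ae (Filter.Eventually.of_forall h1)]
    rw [integral_sub hI2 hint]
    congr 1
    rw [integral_add (integrable_const (g b)) hIlin, integral_const, hcomm, hmean b]
    simp
  rw [key μ, key a]
  have : g μ ≤ g a + fderiv ℝ g a (μ - a) := tangent_le_aux g hconc hdiff a μ
  simp only [sub_self, map_zero, add_zero]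
  linarith
end
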